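/- Let (G, p) be a finite critical net in ℝ^k satisfying the balance condition, and let v ∈ EuclideanSpace ℝ (Fin k). Then the total entering current equals the total exiting current: ∑_{l ∈ ∂X with ⟪u_l, v⟫ > 0} ⟪u_l, v⟫ = − ∑_{l ∈ ∂X with ⟪u_l, v⟫ < 0} ⟪u_l, v⟫, and both are equal to (1/2) ∑_{l ∈ ∂X} |⟪u_l, v⟫|. -/
import Mathlib


open scoped RealInnerProductSpace

/-- In a finite critical net in `ℝ^k` satisfying the balance
condition, for every direction `v` the total current entering at the leaves equals the
total current exiting at the leaves, and both equal half the sum of the absolute values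
of the leaf currents. -/
theorem entering_current_eq_exiting_current
    {k : ℕ} (hk : 1 ≤ k) {V : Type*} [Fintype V] [DecidableEq V]
    (G : SimpleGraph V) [DecidableRel G.Adj]
    (p : V → EuclideanSpace ℝ (Fin k)) (hinj : Function.Injective p)
    (hdeg1 : ∀ x : V, 1 ≤ G.degree x)
    (hnoLL : ∀ x y : V, G.Adj x y → ¬(G.degree x = 1 ∧ G.degree y = 1))
    (hbal : ∀ x : V, 2 ≤ G.degree x →
      ∑ y ∈ G.neighborFinset x, (‖p x - p y‖)⁻¹ • (p x - p y) = 0)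
    (n : V → V) (hn : ∀ l : V, G.degree l = 1 → G.Adj l (n l))
    (v : EuclideanSpace ℝ (Fin k)) :
    (∑ l ∈ (Finset.univ.filter fun l : V => G.degree l = 1).filter
        (fun l => 0 < ⟪(‖p l - p (n l)‖)⁻¹ • (p l - p (n l)), v⟫),
        ⟪(‖p l - p (n l)‖)⁻¹ • (p l - p (n l)), v⟫
      = - ∑ l ∈ (Finset.univ.filter fun l : V => G.degree l = 1).filter
          (fun l => ⟪(‖p l - p (n l)‖)⁻¹ • (p l - p (n l)), v⟫ < 0),
          ⟪(‖p l - p (n l)‖)⁻¹ • (p l - p (n l)), v⟫)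
    ∧ (∑ l ∈ (Finset.univ.filter fun l : V => G.degree l = 1).filter
        (fun l => 0 < ⟪(‖p l - p (n l)‖)⁻¹ • (p l - p (n l)), v⟫),
        ⟪(‖p l - p (n l)‖)⁻¹ • (p l - p (n l)), v⟫
      = (1 / 2 : ℝ) * ∑ l ∈ Finset.univ.filter (fun l : V => G.degree l = 1),
          |⟪(‖p l - p (n l)‖)⁻¹ • (p l - p (n l)), v⟫|) := by
  classical
  set f : V → ℝ := fun l => ⟪(‖p l - p (n l)‖)⁻¹ • (p l - p (n l)), v⟫ with hf
  set g : V → V → ℝ := fun x y => ⟪(‖p x - p y‖)⁻¹ • (p x - p y), v⟫ with hg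
  have hganti : ∀ x y : V, g x y = - g y x := by
    intro x y
    simp only [hg]
    rw [show p x - p y = -(p y - p x) from (neg_sub _ _).symm, norm_neg, smul_neg,
      inner_neg_left]
  -- total sum is zero by antisymmetry
  have hT : ∑ x : V, ∑ y ∈ G.neighborFinset x, g x y = 0 := by
    have h1 : ∀ x : V, ∑ y ∈ G.neighborFinset x, g x y
        = ∑ y : V, if G.Adj x y then g x y else 0 := by
      intro x
      rw [SimpleGraph.neighborFinset_eq_filter, Finset.sum_filter]
    have h2 : (∑ x : V, ∑ y : V, if G.Adj x y then g x y else 0)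
        = - ∑ x : V, ∑ y : V, if G.Adj x y then g x y else 0 := by
      conv_lhs => rw [Finset.sum_comm]
      rw [← Finset.sum_neg_distrib]
      refine Finset.sum_congr rfl fun x _ => ?_
      rw [← Finset.sum_neg_distrib]
      refine Finset.sum_congr rfl fun y _ => ?_
      by_cases h : G.Adj x y
      · simp [h, h.symm, hganti y x]
      · have h' : ¬ G.Adj y x := fun h' => h h'.symm
        simp [h, h']
    simp only [h1]
    linarith [h2]
  set S := Finset.univ.filter fun l : V => G.degree l = 1 with hS
  have hleaf : ∀ l : V, G.degree l = 1 → G.neighborFinset l = {n l} := by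
    intro l hl
    have hm : n l ∈ G.neighborFinset l := (SimpleGraph.mem_neighborFinset _ _ _).2 (hn l hl)
    have hc : (G.neighborFinset l).card = 1 := hl
    obtain ⟨a, ha⟩ := Finset.card_eq_one.1 hc
    rw [ha] at hm ⊢
    simp only [Finset.mem_singleton] at hm
    rw [hm]
  have hsum : ∑ l ∈ S, f l = 0 := by
    have hsplit := Finset.sum_filter_add_sum_filter_not Finset.univ
      (fun l : V => G.degree l = 1) (fun x => ∑ y ∈ G.neighborFinset x, g x y)
    have hleafsum : ∑ x ∈ S, ∑ y ∈ G.neighborFinset x, g x y = ∑ l ∈ S, f l := by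
      refine Finset.sum_congr rfl fun l hl => ?_
      have hl1 : G.degree l = 1 := by
        simpa [hS] using hl
      rw [hleaf l hl1, Finset.sum_singleton]
    have hintsum : ∑ x ∈ Finset.univ.filter (fun l : V => ¬ G.degree l = 1),
        ∑ y ∈ G.neighborFinset x, g x y = 0 := by
      refine Finset.sum_eq_zero fun x hx => ?_
      have hx1 : ¬ G.degree x = 1 := by simpa using hx
      have hx2 : 2 ≤ G.degree x := by
        have := hdeg1 x; omega
      simp only [hg]
      rw [← sum_inner, hbal x hx2, inner_zero_left]
    rw [hleafsum, hintsum] at hsplit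
    linarith [hT, hsplit]
  -- split into positive / negative parts
  set Sp := S.filter (fun l => 0 < f l) with hSp
  set Sn := S.filter (fun l => f l < 0) with hSn
  have h1 : ∑ l ∈ Sp, f l + ∑ l ∈ S.filter (fun l => ¬ 0 < f l), f l = 0 := by
    rw [Finset.sum_filter_add_sum_filter_not, hsum]
  have h2 : ∑ l ∈ S.filter (fun l => ¬ 0 < f l), f l = ∑ l ∈ Sn, f l := by
    refine (Finset.sum_subset ?_ ?_).symm
    · intro l hl
      simp only [hSn, Finset.mem_filter] at hl ⊢
      exact ⟨hl.1, by linarith [hl.2]⟩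
    · intro l hl hln
      simp only [hSn, Finset.mem_filter] at hl hln
      have := hl.2
      have h0 : ¬ f l < 0 := fun h => hln ⟨hl.1, h⟩
      linarith
  have habs : ∑ l ∈ S, |f l| = ∑ l ∈ Sp, f l - ∑ l ∈ Sn, f l := by
    rw [← Finset.sum_filter_add_sum_filter_not S (fun l => 0 < f l) (fun l => |f l|)]
    have ha : ∑ l ∈ Sp, |f l| = ∑ l ∈ Sp, f l := by
      refine Finset.sum_congr rfl fun l hl => ?_
      simp only [hSp, Finset.mem_filter] at hl
      exact abs_of_pos hl.2
    have hb : ∑ l ∈ S.filter (fun l => ¬ 0 < f l), |f l|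
        = - ∑ l ∈ S.filter (fun l => ¬ 0 < f l), f l := by
      rw [← Finset.sum_neg_distrib]
      refine Finset.sum_congr rfl fun l hl => ?_
      simp only [Finset.mem_filter] at hl
      exact abs_of_nonpos (by linarith [hl.2])
    rw [ha, hb, h2]
    ring
  constructor
  · linarith [h1, h2]
  · rw [habs]; linarith [h1, h2]
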